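/- Let A be a Noetherian commutative ring and let I and J be ideals of A. Then the Ratliff-Rush closure of IJ equals the union over all r, s ≥ 0 of the colon ideals (I^{r+1}J^{s+1} : I^r J^s). -/

import Mathlib

/-- The Ratliff-Rush closure of an ideal `K` in a Noetherian ring:
the union over `n ≥ 0` of `(K^(n+1) : K^n)`. -/
def ratliffRushClosure {A : Type*} [CommRing A] (K : Ideal A) : Set A :=
  ⋃ n : ℕ, ((K ^ (n + 1)).colon (K ^ n : Ideal A) : Set A)

lemma colon_le_mul_colon_mul {A : Type*} [CommRing A] (Q N P : Ideal A) :
    N.colon P ≤ (Q * N).colon (Q * P) := by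
  intro x hx
  rw [Submodule.mem_colon] at hx ⊢
  intro p hp
  refine Submodule.mul_induction_on hp (fun q hq p' hp' => ?_) (fun a b ha hb => ?_)
  · have : x • (q * p') = q * (x • p') := by
      simp [smul_eq_mul]; ring
    rw [this]
    exact Ideal.mul_mem_mul hq (hx p' hp')
  · rw [smul_add]; exact Submodule.add_mem _ ha hb

/-- For ideals `I, J` of a Noetherian commutative ring `A`,
the Ratliff-Rush closure of `IJ` equals
`⋃_{r,s ≥ 0} (I^(r+1) J^(s+1) : I^r J^s)`. -/
theorem ratliffRush_mul_eq_union_colon {A : Type*} [CommRing A] [IsNoetherianRing A]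
    (I J : Ideal A) :
    ratliffRushClosure (I * J) =
      ⋃ r : ℕ, ⋃ s : ℕ, (((I ^ (r + 1) * J ^ (s + 1))).colon (I ^ r * J ^ s) : Set A) := by
  ext x
  simp only [ratliffRushClosure, Set.mem_iUnion, SetLike.mem_coe]
  constructor
  · rintro ⟨n, hn⟩
    exact ⟨n, n, by simpa [mul_pow] using hn⟩
  · rintro ⟨r, s, h⟩
    refine ⟨max r s, ?_⟩
    have key := colon_le_mul_colon_mul (I ^ (max r s - r) * J ^ (max r s - s))
      (I ^ (r + 1) * J ^ (s + 1)) (I ^ r * J ^ s) h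
    have e1 : I ^ (max r s - r) * J ^ (max r s - s) * (I ^ (r + 1) * J ^ (s + 1)) =
        I ^ (max r s + 1) * J ^ (max r s + 1) := by
      rw [mul_mul_mul_comm, ← pow_add, ← pow_add]
      congr 2 <;> omega
    have e2 : I ^ (max r s - r) * J ^ (max r s - s) * (I ^ r * J ^ s) =
        I ^ (max r s) * J ^ (max r s) := by
      rw [mul_mul_mul_comm, ← pow_add, ← pow_add]
      congr 2 <;> omega
    rw [e1, e2] at key
    simpa [mul_pow] using key
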